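/- Every hill y ∈ D' of height h ≥ 2 decomposes uniquely as y = 1 u_1 1 u_2 ⋯ 1 u_{h-2} 1 1 v_0 0 v_1 0 ⋯ 0 v_{h-2} 0 0 with u_1,...,u_{h-2} ∈ D and complement(v_0),...,complement(v_{h-2}) ∈ D, where the i-th bulge u_i has height at most h-1-i for i = 1,...,h-2 and the i-th dent v_i has depth at most h-1-i for i = 0,...,h-2. For h = 1, y = 10 has no bulges or dents. -/

import Mathlib

/-- A Dyck word: equal numbers of 1s (`true`) and 0s (`false`), with every prefix
containing at least as many 1s as 0s. -/
def IsDyck (w : List Bool) : Prop :=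
  w.count true = w.count false ∧
    ∀ i, (w.take i).count false ≤ (w.take i).count true

/-- A word in `D'`: a nonempty Dyck word with strictly more 1s than 0s in every proper
nonempty prefix, i.e. a word of the form `1 u 0` with `u ∈ D`. -/
def IsPrimeDyck (w : List Bool) : Prop :=
  IsDyck w ∧ w ≠ [] ∧ ∀ i, 0 < i → i < w.length →
    (w.take i).count false < (w.take i).count true

/-- The height of a lattice path (1 = up-step, 0 = down-step): the maximal value of
(#1s − #0s) over all prefixes. -/
def heightList (w : List Bool) : ℕ :=
  Finset.sup (Finset.range (w.length + 1))
    (fun i => (w.take i).count true - (w.take i).count false)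

/-- The word `1 u_1 1 u_2 ⋯ 1 u_{h-2} 1 1 v_0 0 v_1 0 ⋯ 0 v_{h-2} 0 0` built from the
bulges `us = [u_1,…,u_{h-2}]` and the dents `vs = [v_0,…,v_{h-2}]`. -/
def hillWord (us vs : List (List Bool)) : List Bool :=
  (us.map (fun u => true :: u)).flatten ++ [true, true] ++
    (vs.map (fun v => v ++ [false])).flatten ++ [false]

namespace HillAux

/-- integer prefix height function -/
def fI (w : List Bool) (i : ℕ) : ℤ :=
  ((w.take i).count true : ℤ) - ((w.take i).count false : ℤ)

@[simp] lemma fI_zero (w : List Bool) : fI w 0 = 0 := by simp [fI]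

@[simp] lemma fI_nil (i : ℕ) : fI [] i = 0 := by simp [fI]

lemma fI_of_length_le {w : List Bool} {i : ℕ} (h : w.length ≤ i) :
    fI w i = fI w w.length := by
  simp [fI, List.take_of_length_le h, List.take_of_length_le (le_refl w.length)]

lemma fI_append_left {a b : List Bool} {i : ℕ} (h : i ≤ a.length) :
    fI (a ++ b) i = fI a i := by
  simp [fI, List.take_append_of_le_length h]

lemma fI_append_right (a b : List Bool) (i : ℕ) :
    fI (a ++ b) (a.length + i) = fI a a.length + fI b i := by
  simp [fI, List.take_append, List.take_of_length_le (le_refl a.length),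
    List.take_of_length_le (Nat.le_add_right a.length i), List.count_append]
  ring

lemma fI_cons (b : Bool) (l : List Bool) (i : ℕ) :
    fI (b :: l) (i + 1) = (if b then 1 else -1) + fI l i := by
  have h := fI_append_right [b] l i
  simp only [List.singleton_append, List.length_singleton] at h
  rw [show 1 + i = i + 1 by omega] at h
  rw [h]
  cases b <;> simp [fI] <;> ring

lemma fI_cons_true (l : List Bool) (i : ℕ) : fI (true :: l) (i + 1) = 1 + fI l i := by
  have := fI_cons true l i
  simpa using this

lemma fI_succ (w : List Bool) (i : ℕ) (h : i < w.length) :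
    fI w (i + 1) = fI w i + (if w[i] then 1 else -1) := by
  unfold fI
  rw [List.take_succ, List.getElem?_eq_getElem h]
  cases hb : w[i] <;> simp [List.count_append, hb] <;> push_cast <;> ring

lemma fI_step (w : List Bool) (i : ℕ) :
    fI w (i + 1) = fI w i + 1 ∨ fI w (i + 1) = fI w i - 1 ∨ fI w (i + 1) = fI w i := by
  rcases lt_or_ge i w.length with h | h
  · rw [fI_succ w i h]; cases hb : w[i] <;> simp [hb] <;> omega
  · right; right
    rw [fI_of_length_le h, fI_of_length_le (by omega)]

lemma fI_map_not (v : List Bool) (i : ℕ) : fI (v.map not) i = - fI v i := by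
  have h1 : (v.map not).take i = (v.take i).map not := List.map_take.symm
  have c1 : ((v.take i).map not).count true = (v.take i).count false := by
    simpa using List.count_map_of_injective (v.take i) not
      (fun a b => by cases a <;> cases b <;> simp) false
  have c2 : ((v.take i).map not).count false = (v.take i).count true := by
    simpa using List.count_map_of_injective (v.take i) not
      (fun a b => by cases a <;> cases b <;> simp) true
  unfold fI
  rw [h1, c1, c2]
  ring

lemma isDyck_iff (u : List Bool) :
    IsDyck u ↔ fI u u.length = 0 ∧ ∀ i ≤ u.length, 0 ≤ fI u i := by
  constructor
  · rintro ⟨h1, h2⟩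
    constructor
    · simp [fI, List.take_of_length_le (le_refl u.length), h1]
    · intro i _; have := h2 i; simp [fI]; omega
  · rintro ⟨h1, h2⟩
    constructor
    · have := h1; simp [fI, List.take_of_length_le (le_refl u.length)] at this; omega
    · intro i
      rcases le_or_gt i u.length with h | h
      · have := h2 i h; simp [fI] at this; omega
      · have := h2 u.length (le_refl _)
        simp [fI, List.take_of_length_le h.le, List.take_of_length_le (le_refl u.length)] at this ⊢
        omega

lemma heightList_le_iff (u : List Bool) (c : ℕ) :
    heightList u ≤ c ↔ ∀ i ≤ u.length, fI u i ≤ c := by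
  rw [heightList, Finset.sup_le_iff]
  constructor
  · intro H i hi
    have := H i (Finset.mem_range.mpr (by omega))
    simp [fI]; omega
  · intro H i hi
    have := H i (by simpa using Nat.lt_succ_iff.mp (Finset.mem_range.mp hi))
    simp [fI] at this; omega

lemma heightList_eq_attained (u : List Bool) {h : ℕ} (hh : 1 ≤ h)
    (he : heightList u = h) : ∃ i ≤ u.length, fI u i = h := by
  obtain ⟨i, hi, hf⟩ := Finset.exists_mem_eq_sup (Finset.range (u.length + 1))
    ⟨0, by simp⟩ (fun i => (u.take i).count true - (u.take i).count false)
  refine ⟨i, by simpa using Nat.lt_succ_iff.mp (Finset.mem_range.mp hi), ?_⟩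
  rw [heightList] at he
  rw [he] at hf
  simp [fI]; omega

end HillAux

namespace HillAux

/-- the left word `1 u_1 1 u_2 ⋯ 1 u_k 1 1` -/
def Wl (us : List (List Bool)) : List Bool :=
  (us.map (fun u => true :: u)).flatten ++ [true, true]

/-- the right word `v_0 0 v_1 0 ⋯ v_k 0 0` -/
def Wr (vs : List (List Bool)) : List Bool :=
  (vs.map (fun v => v ++ [false])).flatten ++ [false]

lemma Wl_cons (u : List Bool) (us : List (List Bool)) :
    Wl (u :: us) = (true :: u) ++ Wl us := by
  simp [Wl]

lemma Wr_cons (v : List Bool) (vs : List (List Bool)) :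
    Wr (v :: vs) = (v ++ [false]) ++ Wr vs := by
  simp [Wr]

lemma isDyck_not_iff (v : List Bool) :
    IsDyck (v.map not) ↔ fI v v.length = 0 ∧ ∀ i ≤ v.length, fI v i ≤ 0 := by
  rw [isDyck_iff]
  simp only [List.length_map, fI_map_not]
  constructor
  · rintro ⟨h1, h2⟩; exact ⟨by omega, fun i hi => by have := h2 i hi; omega⟩
  · rintro ⟨h1, h2⟩; exact ⟨by omega, fun i hi => by have := h2 i hi; omega⟩

lemma heightList_not_le_iff (v : List Bool) (c : ℕ) :
    heightList (v.map not) ≤ c ↔ ∀ i ≤ v.length, -(c : ℤ) ≤ fI v i := by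
  rw [heightList_le_iff]
  simp only [List.length_map, fI_map_not]
  constructor
  · intro H i hi; have := H i hi; omega
  · intro H i hi; have := H i hi; omega

lemma fI_two_true_one : fI [true, true] 1 = 1 := by decide
lemma fI_two_true_two : fI [true, true] 2 = 2 := by decide
@[simp] lemma Wl_nil : Wl ([] : List (List Bool)) = [true, true] := by simp [Wl]
@[simp] lemma Wr_nil : Wr ([] : List (List Bool)) = [false] := by simp [Wr]

/-- total height gain of the left word -/
lemma Wl_total (us : List (List Bool)) (hd : ∀ u ∈ us, IsDyck u) :
    fI (Wl us) (Wl us).length = us.length + 2 := by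
  induction us with
  | nil =>
      have : ([true, true] : List Bool).length = 2 := by decide
      simp [this, fI_two_true_two]
  | cons u us ih =>
      rw [Wl_cons]
      have hlen : ((true :: u) ++ Wl us).length = (true :: u).length + (Wl us).length := by
        simp; omega
      rw [hlen, fI_append_right]
      have hu : IsDyck u := hd u (by simp)
      have hu0 : fI u u.length = 0 := ((isDyck_iff u).mp hu).1
      have h1 : fI (true :: u) (u.length + 1) = 1 + fI u u.length := by
        simpa using fI_cons true u u.length
      have := ih (fun v hv => hd v (by simp [hv]))
      simp only [List.length_cons]
      rw [h1, hu0, this]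
      push_cast; ring

/-- every nonempty prefix of the left word has height ≥ 1 -/
lemma Wl_pos (us : List (List Bool)) (hd : ∀ u ∈ us, IsDyck u) :
    ∀ i, 0 < i → 1 ≤ fI (Wl us) i := by
  induction us with
  | nil =>
      intro i hi
      simp only [Wl_nil]
      match i, hi with
      | 1, _ => rw [fI_two_true_one]
      | (j+2), _ =>
          have : fI [true, true] (j + 2) = fI [true, true] 2 := by
            rcases j with _ | j
            · rfl
            · rw [fI_of_length_le (by simp only [List.length_cons, List.length_nil]; omega), show ([true,true]:List Bool).length = 2 from rfl]
          rw [this, fI_two_true_two]; omega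
  | cons u us ih =>
      intro i hi
      rw [Wl_cons]
      have hu : IsDyck u := hd u (by simp)
      obtain ⟨hu0, hupos⟩ := (isDyck_iff u).mp hu
      rcases le_or_gt i (u.length + 1) with h | h
      · rw [fI_append_left (by simpa using h)]
        obtain ⟨i', rfl⟩ : ∃ i', i = i' + 1 := ⟨i - 1, by omega⟩
        rw [fI_cons]
        have := hupos i' (by omega)
        simp; omega
      · obtain ⟨j, rfl⟩ : ∃ j, i = (u.length + 1) + j := ⟨i - (u.length+1), by omega⟩
        have hlen : (true :: u).length = u.length + 1 := by simp
        rw [← hlen, fI_append_right]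
        have h1 : fI (true :: u) (true :: u).length = 1 := by
          rw [hlen]
          have := fI_cons true u u.length
          simp at this; rw [this, hu0]; ring
        have h2 := ih (fun v hv => hd v (by simp [hv])) j (by omega)
        rw [h1]; omega

/-- bound on prefixes of the left word from the height bounds of the bulges -/
lemma Wl_bound (c : ℕ) (us : List (List Bool)) (hlen : us.length ≤ c)
    (hd : ∀ j < us.length, IsDyck (us.getD j []) ∧ heightList (us.getD j []) ≤ c - j) :
    ∀ i < (Wl us).length, fI (Wl us) i ≤ (c : ℤ) + 1 := by
  induction us generalizing c with
  | nil =>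
      intro i hi
      simp only [Wl_nil] at hi ⊢
      match i, hi with
      | 0, _ => simp; omega
      | 1, _ => rw [fI_two_true_one]; omega
  | cons u us ih =>
      intro i hi
      rw [Wl_cons] at hi ⊢
      have hilen : i < u.length + 1 + (Wl us).length := by
        simp only [List.length_append, List.length_cons] at hi; omega
      have hlen' : us.length + 1 ≤ c := by simpa using hlen
      have hc1 : 1 ≤ c := by omega
      have hu : IsDyck u := (hd 0 (by simp)).1
      have hub : heightList u ≤ c := by simpa using (hd 0 (by simp)).2
      obtain ⟨hu0, hupos⟩ := (isDyck_iff u).mp hu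
      rcases le_or_gt i (u.length + 1) with h | h
      · rw [fI_append_left (by simpa using h)]
        rcases Nat.eq_zero_or_pos i with rfl | hi0
        · simp; omega
        obtain ⟨i', rfl⟩ : ∃ i', i = i' + 1 := ⟨i - 1, by omega⟩
        rw [fI_cons]
        have := (heightList_le_iff u c).mp hub i' (by omega)
        simp; omega
      · obtain ⟨j, rfl⟩ : ∃ j, i = (u.length + 1) + j := ⟨i - (u.length+1), by omega⟩
        have hlen2 : (true :: u).length = u.length + 1 := by simp
        rw [← hlen2, fI_append_right]
        have h1 : fI (true :: u) (true :: u).length = 1 := by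
          rw [hlen2]
          have := fI_cons true u u.length
          simp at this; rw [this, hu0]; ring
        have hd' : ∀ j < us.length, IsDyck (us.getD j []) ∧
            heightList (us.getD j []) ≤ (c - 1) - j := by
          intro j hj
          have := hd (j+1) (by simpa using Nat.succ_lt_succ hj)
          simpa [Nat.sub_sub, Nat.add_comm 1 j] using this
        have h2 := ih (c-1) (by omega) hd' j (by omega)
        rw [h1]
        have : ((c : ℤ) - 1) + 1 = c := by ring
        have hc : ((c - 1 : ℕ) : ℤ) = (c : ℤ) - 1 := by omega
        rw [hc] at h2; omega

/-- every prefix of the right word has height ≤ 0 -/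
lemma Wr_nonpos (vs : List (List Bool)) (hd : ∀ v ∈ vs, IsDyck (v.map not)) :
    ∀ i, fI (Wr vs) i ≤ 0 := by
  induction vs with
  | nil =>
      intro i
      simp only [Wr_nil]
      rcases Nat.eq_zero_or_pos i with rfl | hi
      · simp
      · have : fI [false] i = fI [false] 1 := by
          rcases i with _ | _ | i
          · omega
          · rfl
          · rw [fI_of_length_le (by simp), show ([false]:List Bool).length = 1 from rfl]
        rw [this]; decide
  | cons v vs ih =>
      intro i
      rw [Wr_cons]
      obtain ⟨hv0, hvneg⟩ := (isDyck_not_iff v).mp (hd v (by simp))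
      rcases le_or_gt i v.length with h | h
      · rw [fI_append_left (by simp; omega)]
        have h2 : fI (v ++ [false]) i = fI v i := fI_append_left h
        rw [h2]; exact hvneg i h
      · have hfull : fI (v ++ [false]) (v ++ [false]).length = -1 := by
          have hl : (v ++ [false]).length = v.length + 1 := by simp
          rw [hl, fI_append_right v [false] 1, hv0]
          decide
        rcases le_or_gt i (v.length + 1) with h2 | h2
        · have : i = v.length + 1 := by omega
          subst this
          rw [fI_append_left (by simp)]
          have h3 : fI (v ++ [false]) (v.length + 1) = -1 := by simpa using hfull
          omega
        · obtain ⟨j, rfl⟩ : ∃ j, i = (v.length + 1) + j := ⟨i - (v.length+1), by omega⟩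
          have hl : (v ++ [false]).length = v.length + 1 := by simp
          rw [← hl, fI_append_right, hfull]
          have := ih (fun w hw => hd w (by simp [hw])) j
          omega

end HillAux

namespace HillAux

lemma fI_le (w : List Bool) (i : ℕ) : fI w i ≤ i := by
  have h1 := List.count_le_length (a := true) (l := w.take i)
  have h2 := List.length_take_le i w
  unfold fI
  have h3 : (0:ℕ) ≤ (w.take i).count false := Nat.zero_le _
  omega

lemma neg_fI_le (w : List Bool) (i : ℕ) : -(i:ℤ) ≤ fI w i := by
  have h1 := List.count_le_length (a := false) (l := w.take i)
  have h2 := List.length_take_le i w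
  unfold fI
  omega

lemma fI_pos_length {w : List Bool} {i : ℕ} (h : 0 < fI w i) : 0 < w.length := by
  by_contra hc
  have : w = [] := by
    cases w
    · rfl
    · simp at hc
  subst this
  simp at h

lemma left_decomp (h : ℕ) (hh : 2 ≤ h) :
    ∀ L : List Bool,
    fI L L.length = h →
    (∀ i < L.length, fI L i ≤ (h : ℤ) - 1) →
    (∀ i, 0 < i → i ≤ L.length → 1 ≤ fI L i) →
    ∃! us : List (List Bool), us.length = h - 2 ∧
      (∀ j < us.length, IsDyck (us.getD j []) ∧
        heightList (us.getD j []) ≤ h - 2 - j) ∧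
      L = Wl us := by
  induction h, hh using Nat.le_induction with
  | base =>
      intro L h1 h2 h3
      -- show L = [true, true]
      have hlen2 : L.length = 2 := by
        have hub := fI_le L L.length
        have hlb : 2 ≤ L.length := by
          have := h1; omega
        by_contra hc
        have h3' : 3 ≤ L.length := by omega
        have e1 : fI L 1 = 1 := by
          have := h3 1 (by omega) (by omega)
          have := fI_le L 1
          omega
        have e2 : fI L 2 = 1 := by
          have := h3 2 (by omega) (by omega)
          have := h2 2 (by omega)
          omega
        have := fI_succ L 1 (by omega)
        rw [e1] at this
        cases hb : L[1] <;> rw [hb] at this <;> simp at this <;> omega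
      have e1 : fI L 1 = 1 := by
        have := h3 1 (by omega) (by omega)
        have := fI_le L 1
        omega
      have e2 : fI L 2 = 2 := by rw [← hlen2]; exact h1
      have hL : L = [true, true] := by
        obtain ⟨a, b, rfl⟩ := List.length_eq_two.mp hlen2
        have s1 := fI_succ [a, b] 0 (by simp)
        have s2 := fI_succ [a, b] 1 (by simp)
        simp only [fI_zero, zero_add] at s1
        cases a <;> cases b <;> simp_all
      refine ⟨[], ⟨by simp, by simp, by simp [hL]⟩, ?_⟩
      rintro us ⟨hl, -, -⟩
      simpa using List.length_eq_zero_iff.mp (by simpa using hl)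
  | succ h hh ih =>
      intro L h1 h2 h3
      have hL1 : 1 ≤ L.length := by
        have : 0 < fI L L.length := by rw [h1]; positivity
        exact fI_pos_length this
      -- t = last index where fI = 1
      set S : Finset ℕ := (Finset.range (L.length + 1)).filter (fun i => fI L i = 1) with hS
      have hmemS : ∀ i, i ∈ S ↔ i ≤ L.length ∧ fI L i = 1 := by
        intro i
        simp [hS, Finset.mem_filter, Finset.mem_range, Nat.lt_succ_iff]
      have e1 : fI L 1 = 1 := by
        have := h3 1 (by omega) (by omega)
        have := fI_le L 1
        omega
      have hne : S.Nonempty := ⟨1, (hmemS 1).mpr ⟨hL1, e1⟩⟩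
      set t := S.max' hne with htdef
      have htS := S.max'_mem hne
      obtain ⟨htle, ht1⟩ := (hmemS t).mp htS
      have htmax : ∀ i, i ≤ L.length → fI L i = 1 → i ≤ t :=
        fun i hi hfi => S.le_max' i ((hmemS i).mpr ⟨hi, hfi⟩)
      have ht_lt : t < L.length := by
        rcases Nat.lt_or_ge t L.length with h' | h'
        · exact h'
        · exfalso
          have : t = L.length := by omega
          rw [this, h1] at ht1
          omega
      have ht_pos : 1 ≤ t := by
        rcases Nat.eq_zero_or_pos t with h' | h'
        · exfalso; rw [h'] at ht1; simp at ht1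
        · exact h'
      -- split L
      have hL0 : L = L[0] :: L.drop 1 := by
        have := List.drop_eq_getElem_cons (i := 0) (l := L) (by omega)
        simpa using this
      have hL0true : L[0] = true := by
        have := fI_succ L 0 (by omega)
        simp only [fI_zero, zero_add] at this
        rw [e1] at this
        cases hb : L[0]
        · rw [hb] at this; simp at this
        · rfl
      set u : List Bool := (L.drop 1).take (t - 1) with hu
      set L' : List Bool := L.drop t with hL'
      have hulen : u.length = t - 1 := by
        rw [hu]
        simp [List.length_take, List.length_drop]
        omega
      have htake : L.take t = true :: u := by
        conv_lhs => rw [hL0]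
        rw [show t = (t-1) + 1 by omega]
        rw [List.take_succ_cons, hL0true, hu]
      have hsplit : L = (true :: u) ++ L' := by
        conv_lhs => rw [← List.take_append_drop t L]
        rw [htake, hL']
      have htulen : (true :: u).length = t := by simp [hulen]; omega
      -- transfer of fI
      have hfIle : ∀ i ≤ t, fI L i = fI (true :: u) i := by
        intro i hi
        conv_lhs => rw [hsplit]
        exact fI_append_left (by omega)
      have hfIright : ∀ i, fI L (t + i) = 1 + fI L' i := by
        intro i
        conv_lhs => rw [hsplit]
        rw [← htulen, fI_append_right, htulen, ← hfIle t (le_refl t), ht1]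
      have hfIu : ∀ i ≤ u.length, fI u i = fI L (i + 1) - 1 := by
        intro i hi
        have hc := fI_cons_true u i
        have h5 := hfIle (i+1) (by omega)
        rw [h5, hc]; ring
      -- properties of u
      have hudyck : IsDyck u := by
        rw [isDyck_iff]
        constructor
        · rw [hfIu u.length (le_refl _)]
          rw [show u.length + 1 = t by omega, ht1]
          ring
        · intro i hi
          rw [hfIu i hi]
          have := h3 (i+1) (by omega) (by omega)
          omega
      have huheight : heightList u ≤ h - 1 := by
        rw [heightList_le_iff]
        intro i hi
        rw [hfIu i hi]
        have := h2 (i+1) (by omega)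
        have hcast : ((h - 1 : ℕ) : ℤ) = (h : ℤ) - 1 := by omega
        push_cast at this ⊢
        omega
      -- properties of L'
      have hL'len : L'.length = L.length - t := by simp [hL']
      have hfIL' : ∀ i, fI L' i = fI L (t + i) - 1 := by
        intro i
        have := hfIright i
        omega
      have hL'1 : fI L' L'.length = (h : ℤ) := by
        rw [hfIL', show t + L'.length = L.length by omega, h1]
        push_cast; ring
      have hL'2 : ∀ i < L'.length, fI L' i ≤ (h : ℤ) - 1 := by
        intro i hi
        rw [hfIL']
        have := h2 (t + i) (by omega)
        push_cast at this ⊢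
        omega
      have hL'3 : ∀ i, 0 < i → i ≤ L'.length → 1 ≤ fI L' i := by
        intro i hi0 hi
        rw [hfIL']
        have hge := h3 (t + i) (by omega) (by omega)
        have hne : fI L (t + i) ≠ 1 := by
          intro hc
          have := htmax (t + i) (by omega) hc
          omega
        omega
      obtain ⟨us', ⟨hus'len, hus'cond, hus'eq⟩, hus'uniq⟩ := ih L' hL'1 hL'2 hL'3
      refine ⟨u :: us', ⟨?_, ?_, ?_⟩, ?_⟩
      · simp [hus'len]; omega
      · intro j hj
        rcases Nat.eq_zero_or_pos j with rfl | hj0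
        · constructor
          · simpa using hudyck
          · simpa using (le_trans huheight (by omega))
        · obtain ⟨j', rfl⟩ : ∃ j', j = j' + 1 := ⟨j - 1, by omega⟩
          have hj' : j' < us'.length := by simp at hj; omega
          obtain ⟨hd1, hd2⟩ := hus'cond j' hj'
          have hg : (u :: us').getD (j' + 1) [] = us'.getD j' [] := List.getD_cons_succ ..
          rw [hg]
          exact ⟨hd1, le_trans hd2 (by omega)⟩
      · rw [hsplit, hus'eq, Wl_cons]
      · rintro us2 ⟨hl2, hc2, he2⟩
        obtain ⟨u2, us2', rfl⟩ : ∃ a l, us2 = a :: l := by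
          cases us2 with
          | nil => exfalso; simp at hl2; omega
          | cons a l => exact ⟨a, l, rfl⟩
        have hu2dyck : IsDyck u2 := by simpa using (hc2 0 (by simp)).1
        have hus2'dyck : ∀ v ∈ us2', IsDyck v := by
          intro v hv
          obtain ⟨j, hj, rfl⟩ := List.mem_iff_getElem.mp hv
          have hcc := (hc2 (j+1) (by simpa using Nat.succ_lt_succ hj)).1
          rw [List.getD_cons_succ, List.getD_eq_getElem _ _ hj] at hcc
          exact hcc
        have he2' : L = (true :: u2) ++ Wl us2' := by rw [he2, Wl_cons]
        -- t2 = u2.length + 1 equals t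
        have hu20 : fI u2 u2.length = 0 := ((isDyck_iff u2).mp hu2dyck).1
        have ht2mem : fI L (u2.length + 1) = 1 := by
          rw [he2']
          rw [fI_append_left (by simp)]
          rw [fI_cons_true, hu20]
          norm_num
        have ht2len : u2.length + 1 ≤ L.length := by
          rw [he2']
          simp only [List.length_append, List.length_cons]
          omega
        have hafter : ∀ j, 0 < j → 2 ≤ fI L (u2.length + 1 + j) := by
          intro j hj
          rw [he2']
          rw [show u2.length + 1 + j = (true :: u2).length + j by simp]
          rw [fI_append_right]
          have hfull : fI (true :: u2) (true :: u2).length = 1 := by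
            simp only [List.length_cons]
            rw [fI_cons_true, hu20]; ring
          have := Wl_pos us2' hus2'dyck j hj
          rw [hfull]
          omega
        have ht2 : u2.length + 1 = t := by
          have hle : u2.length + 1 ≤ t := htmax _ ht2len ht2mem
          rcases Nat.lt_or_ge (u2.length + 1) t with h' | h'
          · exfalso
            have := hafter (t - (u2.length + 1)) (by omega)
            rw [show u2.length + 1 + (t - (u2.length + 1)) = t by omega] at this
            omega
          · omega
        have hu2eq : u2 = u := by
          have h1' : L.take t = true :: u2 := by
            rw [he2']
            rw [← ht2, show u2.length + 1 = (true :: u2).length by simp]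
            exact List.take_left
          rw [htake] at h1'
          exact (List.cons.injEq _ _ _ _).mp h1'.symm |>.2
        have hL'eq : Wl us2' = L' := by
          have h1' : L.drop t = Wl us2' := by
            rw [he2']
            rw [← ht2, show u2.length + 1 = (true :: u2).length by simp]
            exact List.drop_left
          rw [hL']; exact h1'.symm
        have hus2' : us2' = us' := by
          apply hus'uniq
          refine ⟨by simp at hl2; omega, ?_, hL'eq.symm⟩
          intro j hj
          obtain ⟨hd1, hd2⟩ := hc2 (j+1) (by simpa using Nat.succ_lt_succ hj)
          rw [List.getD_cons_succ] at hd1 hd2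
          exact ⟨hd1, le_trans hd2 (by omega)⟩
        rw [hu2eq, hus2']
end HillAux

namespace HillAux

lemma fI_cons_false (l : List Bool) (i : ℕ) : fI (false :: l) (i + 1) = -1 + fI l i := by
  have := fI_cons false l i
  simpa using this

lemma right_decomp (h : ℕ) (hh : 1 ≤ h) :
    ∀ R : List Bool,
    fI R R.length = -(h : ℤ) →
    (∀ i < R.length, -((h : ℤ) - 1) ≤ fI R i) →
    (∀ i ≤ R.length, fI R i ≤ 0) →
    ∃! vs : List (List Bool), vs.length = h - 1 ∧
      (∀ j < vs.length, IsDyck ((vs.getD j []).map not) ∧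
        heightList ((vs.getD j []).map not) ≤ h - 1 - j) ∧
      R = Wr vs := by
  induction h, hh using Nat.le_induction with
  | base =>
      intro R h1 h2 h3
      have hlen1 : R.length = 1 := by
        have := neg_fI_le R R.length
        have hlb : 1 ≤ R.length := by
          rw [h1] at this; push_cast at this ⊢; omega
        by_contra hc
        have h2' : 2 ≤ R.length := by omega
        have e1 : fI R 1 = 0 := by
          have := h2 1 (by omega)
          have := h3 1 (by omega)
          push_cast at this ⊢
          omega
        have := fI_succ R 0 (by omega)
        simp only [fI_zero, zero_add] at this
        rw [e1] at this
        cases hb : R[0] <;> rw [hb] at this <;> simp at this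
      have hR : R = [false] := by
        obtain ⟨a, rfl⟩ := List.length_eq_one_iff.mp hlen1
        have : fI [a] 1 = -1 := by rw [← hlen1] at h1 ⊢; simpa using h1
        cases a
        · rfl
        · exfalso; revert this; decide
      refine ⟨[], ⟨by simp, by simp, by simp [hR]⟩, ?_⟩
      rintro vs ⟨hl, -, -⟩
      simpa using List.length_eq_zero_iff.mp (by simpa using hl)
  | succ h hh ih =>
      intro R h1 h2 h3
      have hR1 : 1 ≤ R.length := by
        by_contra hc
        have hn : R = [] := List.length_eq_zero_iff.mp (by omega)
        rw [hn] at h1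
        simp at h1
        omega
      set S : Finset ℕ := (Finset.range (R.length + 1)).filter (fun i => fI R i = 0) with hS
      have hmemS : ∀ i, i ∈ S ↔ i ≤ R.length ∧ fI R i = 0 := by
        intro i
        simp [hS, Finset.mem_filter, Finset.mem_range, Nat.lt_succ_iff]
      have hne : S.Nonempty := ⟨0, (hmemS 0).mpr ⟨by omega, by simp⟩⟩
      set t := S.max' hne with htdef
      have htS := S.max'_mem hne
      obtain ⟨htle, ht0⟩ := (hmemS t).mp htS
      have htmax : ∀ i, i ≤ R.length → fI R i = 0 → i ≤ t :=
        fun i hi hfi => S.le_max' i ((hmemS i).mpr ⟨hi, hfi⟩)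
      have ht_lt : t < R.length := by
        rcases Nat.lt_or_ge t R.length with h' | h'
        · exact h'
        · exfalso
          have : t = R.length := by omega
          rw [this, h1] at ht0
          push_cast at ht0; omega
      have hRt : R[t] = false := by
        have hs := fI_succ R t (by omega)
        rw [ht0, zero_add] at hs
        have hle := h3 (t+1) (by omega)
        have hne' : fI R (t+1) ≠ 0 := by
          intro hc
          have := htmax (t+1) (by omega) hc
          omega
        cases hb : R[t]
        · rfl
        · exfalso; rw [hb] at hs; simp at hs; omega
      set v : List Bool := R.take t with hv
      set R'' : List Bool := R.drop (t+1) with hR''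
      have hvlen : v.length = t := by
        rw [hv, List.length_take]; omega
      have hsplit : R = v ++ (false :: R'') := by
        conv_lhs => rw [← List.take_append_drop t R]
        rw [List.drop_eq_getElem_cons (by omega : t < R.length), hRt]
      have hR''len : R''.length = R.length - (t+1) := by
        rw [hR'', List.length_drop]
      -- transfer
      have hfIv : ∀ i ≤ t, fI R i = fI v i := by
        intro i hi
        conv_lhs => rw [hsplit]
        exact fI_append_left (by omega)
      have hv0 : fI v v.length = 0 := by rw [hvlen, ← hfIv t (le_refl t), ht0]
      have hfIR'' : ∀ i, fI R (t + 1 + i) = -1 + fI R'' i := by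
        intro i
        conv_lhs => rw [hsplit]
        rw [show t + 1 + i = v.length + (1 + i) by omega, fI_append_right, hv0,
          show 1 + i = i + 1 by omega, fI_cons_false]
        ring
      -- v conditions
      have hvdyck : IsDyck (v.map not) := by
        rw [isDyck_not_iff]
        refine ⟨hv0, fun i hi => ?_⟩
        rw [← hfIv i (by omega)]
        exact h3 i (by omega)
      have hvheight : heightList (v.map not) ≤ h := by
        rw [heightList_not_le_iff]
        intro i hi
        rw [← hfIv i (by omega)]
        have := h2 i (by omega)
        push_cast at this ⊢
        omega
      -- R'' conditions
      have hR''1 : fI R'' R''.length = -(h : ℤ) := by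
        have := hfIR'' R''.length
        rw [show t + 1 + R''.length = R.length by omega, h1] at this
        push_cast at this ⊢
        omega
      have hR''2 : ∀ i < R''.length, -((h : ℤ) - 1) ≤ fI R'' i := by
        intro i hi
        have := hfIR'' i
        have h2' := h2 (t+1+i) (by omega)
        push_cast at h2' this ⊢
        omega
      have hR''3 : ∀ i ≤ R''.length, fI R'' i ≤ 0 := by
        intro i hi
        have heq := hfIR'' i
        have hle := h3 (t+1+i) (by omega)
        have hne' : fI R (t+1+i) ≠ 0 := by
          intro hc
          have := htmax (t+1+i) (by omega) hc
          omega
        omega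
      obtain ⟨vs'', ⟨hvs''len, hvs''cond, hvs''eq⟩, hvs''uniq⟩ := ih R'' hR''1 hR''2 hR''3
      refine ⟨v :: vs'', ⟨?_, ?_, ?_⟩, ?_⟩
      · simp [hvs''len]; omega
      · intro j hj
        rcases Nat.eq_zero_or_pos j with rfl | hj0
        · exact ⟨by simpa using hvdyck, by simpa using le_trans hvheight (by omega)⟩
        · obtain ⟨j', rfl⟩ : ∃ j', j = j' + 1 := ⟨j - 1, by omega⟩
          have hj' : j' < vs''.length := by simp at hj; omega
          obtain ⟨hd1, hd2⟩ := hvs''cond j' hj'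
          rw [List.getD_cons_succ]
          exact ⟨hd1, le_trans hd2 (by omega)⟩
      · rw [hsplit, hvs''eq, Wr_cons]
        simp
      · rintro vs2 ⟨hl2, hc2, he2⟩
        obtain ⟨v2, vs2', rfl⟩ : ∃ a l, vs2 = a :: l := by
          cases vs2 with
          | nil => exfalso; simp at hl2; omega
          | cons a l => exact ⟨a, l, rfl⟩
        have hv2dyck : IsDyck (v2.map not) := by simpa using (hc2 0 (by simp)).1
        have hvs2'dyck : ∀ w ∈ vs2', IsDyck (w.map not) := by
          intro w hw
          obtain ⟨j, hj, rfl⟩ := List.mem_iff_getElem.mp hw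
          have hcc := (hc2 (j+1) (by simpa using Nat.succ_lt_succ hj)).1
          rw [List.getD_cons_succ, List.getD_eq_getElem _ _ hj] at hcc
          exact hcc
        have he2' : R = (v2 ++ [false]) ++ Wr vs2' := by rw [he2, Wr_cons]
        have hv20 : fI v2 v2.length = 0 := ((isDyck_not_iff v2).mp hv2dyck).1
        have hv2l : (v2 ++ [false]).length = v2.length + 1 := by simp
        have hfullv2 : fI (v2 ++ [false]) (v2.length + 1) = -1 := by
          rw [show v2.length + 1 = v2.length + 1 from rfl, fI_append_right v2 [false] 1, hv20]
          decide
        have ht2mem : fI R v2.length = 0 := by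
          rw [he2', fI_append_left (by simp), fI_append_left le_rfl, hv20]
        have ht2len : v2.length ≤ R.length := by
          rw [he2']
          simp only [List.length_append, List.length_cons]
          omega
        have hafter : ∀ j, 0 < j → fI R (v2.length + j) ≤ -1 := by
          intro j hj
          rw [he2', show v2.length + j = (v2 ++ [false]).length + (j - 1) by simp; omega,
            fI_append_right, hv2l, hfullv2]
          have := Wr_nonpos vs2' hvs2'dyck (j - 1)
          omega
        have ht2 : v2.length = t := by
          have hle : v2.length ≤ t := htmax _ ht2len ht2mem
          rcases Nat.lt_or_ge v2.length t with h' | h'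
          · exfalso
            have := hafter (t - v2.length) (by omega)
            rw [show v2.length + (t - v2.length) = t by omega] at this
            omega
          · omega
        have hv2eq : v2 = v := by
          have h1' : R.take t = v2 := by
            rw [he2', ← ht2, List.append_assoc]
            exact List.take_left
          rw [← h1', hv]
        have hR''eq : Wr vs2' = R'' := by
          have h1' : R.drop (t+1) = Wr vs2' := by
            rw [he2', ← ht2, ← hv2l]
            exact List.drop_left
          rw [hR'']; exact h1'.symm
        have hvs2' : vs2' = vs'' := by
          apply hvs''uniq
          refine ⟨by simp at hl2; omega, ?_, hR''eq.symm⟩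
          intro j hj
          obtain ⟨hd1, hd2⟩ := hc2 (j+1) (by simpa using Nat.succ_lt_succ hj)
          rw [List.getD_cons_succ] at hd1 hd2
          exact ⟨hd1, le_trans hd2 (by omega)⟩
        rw [hv2eq, hvs2']

end HillAux

namespace HillAux

lemma fI_take (w : List Bool) (p i : ℕ) (h : i ≤ p) : fI (w.take p) i = fI w i := by
  simp [fI, List.take_take, Nat.min_eq_left h]

lemma hillWord_eq (us vs : List (List Bool)) : hillWord us vs = Wl us ++ Wr vs := by
  simp [hillWord, Wl, Wr]

end HillAux

open HillAux in
/-- Every hill `y ∈ D'` of height `h ≥ 2` decomposes **uniquely** as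
`y = 1 u_1 1 u_2 ⋯ 1 u_{h-2} 1 1 v_0 0 v_1 0 ⋯ 0 v_{h-2} 0 0` with `u_i ∈ D` of height
at most `h-1-i` and valleys `v_i` (complemented Dyck words) of depth at most `h-1-i`;
for `h = 1` we simply have `y = 10` (no bulges or dents). -/
theorem hill_decomposition (y : List Bool) (hy : IsPrimeDyck y) :
    (heightList y = 1 → y = [true, false]) ∧
    (2 ≤ heightList y →
      ∃! p : List (List Bool) × List (List Bool),
        p.1.length = heightList y - 2 ∧
        p.2.length = heightList y - 1 ∧
        (∀ j < p.1.length, IsDyck (p.1.getD j []) ∧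
          heightList (p.1.getD j []) ≤ heightList y - 2 - j) ∧
        (∀ j < p.2.length, IsDyck ((p.2.getD j []).map not) ∧
          heightList ((p.2.getD j []).map not) ≤ heightList y - 1 - j) ∧
        y = hillWord p.1 p.2) := by
  obtain ⟨hyd, hyne, hyprime⟩ := hy
  have hend : fI y y.length = 0 := ((isDyck_iff y).mp hyd).1
  have hprime : ∀ i, 0 < i → i < y.length → 1 ≤ fI y i := by
    intro i hi0 hi
    have := hyprime i hi0 hi
    unfold fI
    omega
  have hylen : 1 ≤ y.length := by
    cases y
    · exact absurd rfl hyne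
    · simp
  constructor
  · -- height 1 case
    intro hone
    have hb : ∀ i ≤ y.length, fI y i ≤ 1 := (heightList_le_iff y 1).mp (le_of_eq hone)
    have hlen2 : y.length = 2 := by
      by_contra hc
      rcases Nat.lt_or_ge y.length 2 with h' | h'
      · -- length 1
        have h1 : y.length = 1 := by omega
        have e0 : fI y 1 = 0 := h1 ▸ hend
        have hs := fI_succ y 0 (by omega)
        simp only [fI_zero, zero_add] at hs
        rw [e0] at hs
        cases hb' : y[0] <;> rw [hb'] at hs <;> simp at hs
      · have h3 : 3 ≤ y.length := by omega
        have e1 : fI y 1 = 1 := by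
          have := hprime 1 (by omega) (by omega)
          have := fI_le y 1
          omega
        have e2 : fI y 2 = 1 := by
          have := hprime 2 (by omega) (by omega)
          have := hb 2 (by omega)
          omega
        have := fI_succ y 1 (by omega)
        rw [e1, e2] at this
        cases hb' : y[1] <;> rw [hb'] at this <;> simp at this
    have e1 : fI y 1 = 1 := by
      have := hprime 1 (by omega) (by omega)
      have := fI_le y 1
      omega
    have e2 : fI y 2 = 0 := by rw [← hlen2, hend]
    obtain ⟨a, b, rfl⟩ := List.length_eq_two.mp hlen2
    have s1 := fI_succ [a, b] 0 (by simp)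
    have s2 := fI_succ [a, b] 1 (by simp)
    simp only [fI_zero, zero_add] at s1
    cases a <;> cases b <;> simp_all
  · -- height ≥ 2 case
    intro h2le
    set h : ℕ := heightList y with hh
    have hball : ∀ i ≤ y.length, fI y i ≤ (h : ℤ) :=
      (heightList_le_iff y h).mp (le_of_eq hh.symm)
    obtain ⟨i0, hi0le, hi0⟩ := heightList_eq_attained y (by omega) hh.symm
    set S : Finset ℕ := (Finset.range (y.length + 1)).filter (fun i => fI y i = (h : ℤ))
      with hS
    have hmemS : ∀ i, i ∈ S ↔ i ≤ y.length ∧ fI y i = (h : ℤ) := by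
      intro i
      simp [hS, Finset.mem_filter, Finset.mem_range, Nat.lt_succ_iff]
    have hne : S.Nonempty := ⟨i0, (hmemS i0).mpr ⟨hi0le, hi0⟩⟩
    set p : ℕ := S.min' hne with hp
    obtain ⟨hple, hpval⟩ := (hmemS p).mp (S.min'_mem hne)
    have hpmin : ∀ i, i ≤ y.length → fI y i = (h : ℤ) → p ≤ i :=
      fun i hi hfi => S.min'_le i ((hmemS i).mpr ⟨hi, hfi⟩)
    have hp_lt : p < y.length := by
      rcases Nat.lt_or_ge p y.length with h' | h'
      · exact h'
      · exfalso
        have : p = y.length := by omega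
        rw [this, hend] at hpval
        omega
    have hp_pos : 1 ≤ p := by
      rcases Nat.eq_zero_or_pos p with h' | h'
      · exfalso; rw [h'] at hpval; simp at hpval; omega
      · exact h'
    set L : List Bool := y.take p with hL
    set R : List Bool := y.drop p with hR
    have hLlen : L.length = p := by rw [hL, List.length_take]; omega
    have hsplit : y = L ++ R := (List.take_append_drop p y).symm
    have hfIL : ∀ i ≤ p, fI L i = fI y i := fun i hi => fI_take y p i hi
    have hfIR : ∀ i, fI y (p + i) = (h : ℤ) + fI R i := by
      intro i
      conv_lhs => rw [hsplit]
      rw [show p + i = L.length + i by omega, fI_append_right, hLlen,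
        hfIL p le_rfl, hpval]
    have hRlen : R.length = y.length - p := by rw [hR, List.length_drop]
    -- left part
    obtain ⟨us, ⟨huslen, huscond, huseq⟩, husuniq⟩ :=
      left_decomp h h2le L
        (by rw [hLlen, hfIL p le_rfl, hpval])
        (by
          intro i hi
          rw [hLlen] at hi
          rw [hfIL i (by omega)]
          have h1 := hball i (by omega)
          have h2 : fI y i ≠ (h : ℤ) := by
            intro hc
            have := hpmin i (by omega) hc
            omega
          omega)
        (by
          intro i hi0 hi
          rw [hLlen] at hi
          rw [hfIL i (by omega)]
          exact hprime i hi0 (by omega))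
    -- right part
    obtain ⟨vs, ⟨hvslen, hvscond, hvseq⟩, hvsuniq⟩ :=
      right_decomp h (by omega) R
        (by
          have := hfIR R.length
          rw [show p + R.length = y.length by omega, hend] at this
          omega)
        (by
          intro i hi
          have := hfIR i
          have hpr := hprime (p + i) (by omega) (by omega)
          omega)
        (by
          intro i hi
          have := hfIR i
          have hb := hball (p + i) (by omega)
          omega)
    refine ⟨(us, vs), ⟨huslen, hvslen, huscond, hvscond, ?_⟩, ?_⟩
    · rw [hillWord_eq, ← huseq, ← hvseq, ← hsplit]
    · rintro ⟨us2, vs2⟩ ⟨hl2, hl2', hc2, hc2', he2⟩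
      simp only at hl2 hl2' hc2 hc2' he2
      rw [hillWord_eq] at he2
      have hus2dyck : ∀ u ∈ us2, IsDyck u := by
        intro u hu
        obtain ⟨j, hj, rfl⟩ := List.mem_iff_getElem.mp hu
        have := (hc2 j hj).1
        rwa [List.getD_eq_getElem _ _ hj] at this
      have hL2len : (Wl us2).length ≤ y.length := by
        rw [he2]; simp
      have hfIL2 : fI y (Wl us2).length = (h : ℤ) := by
        rw [he2, fI_append_left le_rfl, Wl_total us2 hus2dyck, hl2]
        omega
      have hpL2 : p = (Wl us2).length := by
        have hle : p ≤ (Wl us2).length := hpmin _ hL2len hfIL2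
        rcases Nat.lt_or_ge p (Wl us2).length with h' | h'
        · exfalso
          have hb := Wl_bound (h - 2) us2 (le_of_eq hl2)
            (by intro j hj; exact hc2 j hj) p h'
          rw [he2, fI_append_left (by omega)] at hpval
          rw [hpval] at hb
          omega
        · omega
      have hL2 : L = Wl us2 := by
        rw [hL, hpL2, he2]
        exact List.take_left
      have hR2 : R = Wr vs2 := by
        rw [hR, hpL2, he2]
        exact List.drop_left
      have hus2 : us2 = us := husuniq us2 ⟨hl2, hc2, hL2⟩
      have hvs2 : vs2 = vs := hvsuniq vs2 ⟨hl2', hc2', hR2⟩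
      rw [Prod.mk.injEq]
      exact ⟨hus2, hvs2⟩
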